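/- arXiv:2507.15080 — 2 statements merged into one kernel-verified Lean document; each statement's English description precedes it below -/
import Mathlib

section
/- If T is a tree of order n ≥ 4 of the form T = T₁ ∘ K₁ (the corona of a tree T₁ with K₁), then the fair domatic number of T equals 2. -/
open SimpleGraph

/-- `D` is a fair dominating set of `G`: it is a dominating set and there is some
`k ≥ 1` such that every vertex outside `D` has exactly `k` neighbors in `D`. -/
def IsFairDomSet {V : Type*} (G : SimpleGraph V) (D : Set V) : Prop :=
  (∀ v ∉ D, ∃ u ∈ D, G.Adj v u) ∧
  ∃ k : ℕ, 1 ≤ k ∧ ∀ v ∉ D, (G.neighborSet v ∩ D).ncard = k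

/-- A fair coalition partition of `G`: a partition of the vertex set into nonempty parts,
each of which is either a singleton fair dominating set, or is not a fair dominating set
but forms a fair coalition with another part that is not a fair dominating set. -/
def IsFairCoalitionPartition {V : Type*} (G : SimpleGraph V) (P : Finset (Set V)) : Prop :=
  (∀ A ∈ P, A.Nonempty) ∧
  (P : Set (Set V)).PairwiseDisjoint id ∧
  ⋃₀ (P : Set (Set V)) = Set.univ ∧
  ∀ A ∈ P, ((∃ v, A = {v}) ∧ IsFairDomSet G A) ∨
    (¬ IsFairDomSet G A ∧ ∃ B ∈ P, B ≠ A ∧ ¬ IsFairDomSet G B ∧ IsFairDomSet G (A ∪ B))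

/-- The fair coalition number of `G`: the maximum number of parts in a fair
coalition partition of `G`. -/
noncomputable def fairCoalitionNumber {V : Type*} (G : SimpleGraph V) : ℕ :=
  sSup {n | ∃ P : Finset (Set V), IsFairCoalitionPartition G P ∧ P.card = n}

/-- A fair domatic partition of `G`: a partition of the vertex set into fair dominating sets. -/
def IsFairDomaticPartition {V : Type*} (G : SimpleGraph V) (P : Finset (Set V)) : Prop :=
  (∀ A ∈ P, A.Nonempty) ∧
  (P : Set (Set V)).PairwiseDisjoint id ∧
  ⋃₀ (P : Set (Set V)) = Set.univ ∧
  ∀ A ∈ P, IsFairDomSet G A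

/-- The fair domatic number of `G`. -/
noncomputable def fairDomaticNumber {V : Type*} (G : SimpleGraph V) : ℕ :=
  sSup {n | ∃ P : Finset (Set V), IsFairDomaticPartition G P ∧ P.card = n}

/-- The corona `G ∘ K₁`: attach one new pendant vertex to each vertex of `G`.
Vertex `(u, false)` is a copy of `u ∈ V(G)`; `(u, true)` is its pendant leaf. -/
def corona {V : Type*} (G : SimpleGraph V) : SimpleGraph (V × Bool) :=
  SimpleGraph.fromRel (fun a b =>
    (a.2 = false ∧ b.2 = false ∧ G.Adj a.1 b.1) ∨ (a.1 = b.1 ∧ a.2 = false ∧ b.2 = true))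

lemma corona_adj_leaf {V : Type*} (G : SimpleGraph V) (u v : V) (c : Bool) :
    (corona G).Adj (u, true) (v, c) ↔ v = u ∧ c = false := by
  simp only [corona, SimpleGraph.fromRel_adj]
  aesop

lemma corona_base_leaf {V : Type*} (G : SimpleGraph V) (u v : V) (c : Bool) :
    (corona G).Adj (u, false) (v, c) → c = true → v = u := by
  simp only [corona, SimpleGraph.fromRel_adj]
  aesop

lemma corona_base_adj_self_leaf {V : Type*} (G : SimpleGraph V) (u : V) :
    (corona G).Adj (u, false) (u, true) := by
  simp only [corona, SimpleGraph.fromRel_adj]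
  aesop

theorem stmt_10 {V : Type*} [Fintype V] (T₁ : SimpleGraph V) (hT₁ : T₁.IsTree)
    (hn : 4 ≤ Fintype.card (V × Bool)) :
    fairDomaticNumber (corona T₁) = 2 := by
  classical
  obtain ⟨u₀⟩ := hT₁.isConnected.nonempty
  set G := corona T₁ with hGdef
  set D0 : Set (V × Bool) := {p | p.2 = false} with hD0def
  set D1 : Set (V × Bool) := {p | p.2 = true} with hD1def
  have hfair0 : IsFairDomSet G D0 := by
    constructor
    · rintro ⟨w, b⟩ hv
      have hb : b = true := by simpa [hD0def] using hv
      subst hb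
      exact ⟨(w, false), rfl, (corona_adj_leaf T₁ w w false).mpr ⟨rfl, rfl⟩⟩
    · refine ⟨1, le_refl 1, ?_⟩
      rintro ⟨w, b⟩ hv
      have hb : b = true := by simpa [hD0def] using hv
      subst hb
      have hset : G.neighborSet (w, true) ∩ D0 = {(w, false)} := by
        ext ⟨x, c⟩
        simp only [Set.mem_inter_iff, mem_neighborSet, Set.mem_singleton_iff]
        constructor
        · rintro ⟨hadj, hc⟩
          have hc' : c = false := by simpa [hD0def] using hc
          obtain ⟨hx, -⟩ := (corona_adj_leaf T₁ w x c).mp hadj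
          simp [hx, hc']
        · rintro h
          rw [Prod.mk.injEq] at h
          obtain ⟨rfl, rfl⟩ := h
          exact ⟨(corona_adj_leaf T₁ _ _ _).mpr ⟨rfl, rfl⟩, rfl⟩
      rw [hset, Set.ncard_singleton]
  have hfair1 : IsFairDomSet G D1 := by
    constructor
    · rintro ⟨w, b⟩ hv
      have hb : b = false := by simpa [hD1def] using hv
      subst hb
      exact ⟨(w, true), rfl, corona_base_adj_self_leaf T₁ w⟩
    · refine ⟨1, le_refl 1, ?_⟩
      rintro ⟨w, b⟩ hv
      have hb : b = false := by simpa [hD1def] using hv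
      subst hb
      have hset : G.neighborSet (w, false) ∩ D1 = {(w, true)} := by
        ext ⟨x, c⟩
        simp only [Set.mem_inter_iff, mem_neighborSet, Set.mem_singleton_iff]
        constructor
        · rintro ⟨hadj, hc⟩
          have hc' : c = true := by simpa [hD1def] using hc
          have hx := corona_base_leaf T₁ w x c hadj hc'
          simp [hx, hc']
        · rintro h
          rw [Prod.mk.injEq] at h
          obtain ⟨rfl, rfl⟩ := h
          exact ⟨corona_base_adj_self_leaf T₁ _, rfl⟩
      rw [hset, Set.ncard_singleton]
  have hD01 : D0 ≠ D1 := by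
    intro h
    have hmem : (u₀, false) ∈ D1 := h ▸ (show (u₀, false) ∈ D0 from rfl)
    simp [hD1def] at hmem
  have hmem2 : 2 ∈ {n | ∃ P : Finset (Set (V × Bool)),
      IsFairDomaticPartition G P ∧ P.card = n} := by
    refine ⟨{D0, D1}, ⟨?_, ?_, ?_, ?_⟩, ?_⟩
    · intro A hA
      rcases Finset.mem_insert.mp hA with rfl | hA
      · exact ⟨(u₀, false), rfl⟩
      · rw [Finset.mem_singleton.mp hA]; exact ⟨(u₀, true), rfl⟩
    · intro A hA B hB hAB
      simp only [Finset.coe_insert, Finset.coe_singleton, Set.mem_insert_iff,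
        Set.mem_singleton_iff] at hA hB
      have hdisj01 : Disjoint D0 D1 := by
        rw [Set.disjoint_left]
        rintro ⟨w, b⟩ h1 h2
        simp [hD0def] at h1
        simp [hD1def] at h2
        rw [h1] at h2
        exact absurd h2 (by simp)
      rcases hA with rfl | rfl <;> rcases hB with rfl | rfl
      · exact absurd rfl hAB
      · exact hdisj01
      · exact hdisj01.symm
      · exact absurd rfl hAB
    · apply Set.eq_univ_of_forall
      rintro ⟨w, b⟩
      cases b
      · exact ⟨D0, by simp, rfl⟩
      · exact ⟨D1, by simp, rfl⟩
    · intro A hA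
      rcases Finset.mem_insert.mp hA with rfl | hA
      · exact hfair0
      · rw [Finset.mem_singleton.mp hA]; exact hfair1
    · rw [Finset.card_insert_of_notMem (by simpa using hD01), Finset.card_singleton]
  have hbound : ∀ n ∈ {n | ∃ P : Finset (Set (V × Bool)),
      IsFairDomaticPartition G P ∧ P.card = n}, n ≤ 2 := by
    rintro n ⟨P, ⟨hne, hdisj, hcov, hfds⟩, rfl⟩
    by_contra h
    push_neg at h
    obtain ⟨A, hA, B, hB, C, hC, hAB, hAC, hBC⟩ := Finset.two_lt_card.mp h
    have hone : ∀ (x : V × Bool), ∀ D ∈ P, ∀ E ∈ P, x ∈ D → x ∈ E → D = E := by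
      intro x D hD E hE hxD hxE
      by_contra hne'
      exact Set.disjoint_left.mp
        (hdisj (Finset.mem_coe.mpr hD) (Finset.mem_coe.mpr hE) hne') hxD hxE
    have key : ∃ D ∈ P, (u₀, false) ∉ D ∧ (u₀, true) ∉ D := by
      by_contra hk
      push_neg at hk
      have h1 : (u₀, false) ∈ A ∨ (u₀, true) ∈ A := by
        by_cases hf : (u₀, false) ∈ A
        · exact Or.inl hf
        · exact Or.inr (hk A hA hf)
      have h2 : (u₀, false) ∈ B ∨ (u₀, true) ∈ B := by
        by_cases hf : (u₀, false) ∈ B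
        · exact Or.inl hf
        · exact Or.inr (hk B hB hf)
      have h3 : (u₀, false) ∈ C ∨ (u₀, true) ∈ C := by
        by_cases hf : (u₀, false) ∈ C
        · exact Or.inl hf
        · exact Or.inr (hk C hC hf)
      rcases h1 with h1 | h1 <;> rcases h2 with h2 | h2 <;> rcases h3 with h3 | h3 <;>
        first
        | exact hAB (hone _ A hA B hB h1 h2)
        | exact hAC (hone _ A hA C hC h1 h3)
        | exact hBC (hone _ B hB C hC h2 h3)
    obtain ⟨D, hD, hfD, htD⟩ := key
    obtain ⟨hdom, -⟩ := hfds D hD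
    obtain ⟨p, hpD, hadj⟩ := hdom (u₀, true) htD
    obtain ⟨x, c⟩ := p
    obtain ⟨rfl, rfl⟩ := (corona_adj_leaf T₁ u₀ x c).mp hadj
    exact hfD hpD
  exact le_antisymm (csSup_le ⟨2, hmem2⟩ hbound) (le_csSup ⟨2, hbound⟩ hmem2)
end

section
/- The fair coalition number of the triangular prism graph K₃ □ K₂ (the Cartesian product of the triangle with an edge) equals 6. -/
open SimpleGraph

abbrev VV : Type := Fin 3 × Fin 2
abbrev GG : SimpleGraph VV := (⊤ : SimpleGraph (Fin 3)) □ (⊤ : SimpleGraph (Fin 2))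

lemma key : ∀ (u : Fin 3) (v x : VV), v ∉ ({(u,0),(u,1)} : Set VV) →
    (x ∈ GG.neighborSet v ∩ {(u,0),(u,1)} ↔ x = (u, v.2)) := by
  simp only [Set.mem_inter_iff, SimpleGraph.mem_neighborSet, SimpleGraph.boxProd_adj,
    SimpleGraph.top_adj, Set.mem_insert_iff, Set.mem_singleton_iff, Prod.mk.injEq, ne_eq,
    Prod.ext_iff, not_or]
  decide

lemma not_fds_singleton (v : VV) : ¬ IsFairDomSet GG {v} := by
  rintro ⟨hdom, -⟩
  obtain ⟨w, hw, hadj⟩ := hdom (v.1 + 1, v.2 + 1) (by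
    simp only [Set.mem_singleton_iff, Prod.ext_iff]
    rintro ⟨h, -⟩
    simp [Fin.ext_iff, Fin.add_def] at h; omega)
  rw [Set.mem_singleton_iff] at hw
  subst hw
  rw [SimpleGraph.boxProd_adj] at hadj
  rcases hadj with ⟨-, h⟩ | ⟨-, h⟩ <;>
    simp [Fin.ext_iff, Fin.add_def] at h <;> omega

lemma fds_pair (u : Fin 3) : IsFairDomSet GG {(u,0),(u,1)} := by
  constructor
  · intro v hv
    have := (key u v (u, v.2) hv).mpr rfl
    exact ⟨(u, v.2), this.2, this.1⟩
  · refine ⟨1, le_refl _, fun v hv => ?_⟩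
    have : GG.neighborSet v ∩ {(u,0),(u,1)} = {(u, v.2)} :=
      Set.ext fun x => key u v x hv
    rw [this, Set.ncard_singleton]

lemma card_le6 (P : Finset (Set VV)) (h : IsFairCoalitionPartition GG P) : P.card ≤ 6 := by
  classical
  obtain ⟨hne, hdisj, -, -⟩ := h
  have : P.card ≤ (Finset.univ : Finset VV).card := by
    apply Finset.card_le_card_of_injOn
      (fun A => if h : A.Nonempty then h.some else ((0,0) : VV))
      (fun _ _ => Finset.mem_univ _)
    intro A hA B hB hAB
    simp only [dif_pos (hne A hA), dif_pos (hne B hB)] at hAB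
    by_contra hneq
    have hd := hdisj (Finset.mem_coe.mpr hA) (Finset.mem_coe.mpr hB) hneq
    exact Set.disjoint_left.mp hd (hAB ▸ (hne A hA).some_mem) (hne B hB).some_mem
  simpa using this

noncomputable instance : DecidableEq (Set VV) := Classical.decEq _

noncomputable def Ppart : Finset (Set VV) := Finset.univ.image (fun x : VV => ({x} : Set VV))

lemma Ppart_card : Ppart.card = 6 := by
  rw [Ppart, Finset.card_image_of_injective _ (fun x y h => Set.singleton_eq_singleton_iff.mp h)]
  simp

lemma Ppart_valid : IsFairCoalitionPartition GG Ppart := by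
  refine ⟨?_, ?_, ?_, ?_⟩
  · rintro A hA
    simp only [Ppart, Finset.mem_image, Finset.mem_univ, true_and] at hA
    obtain ⟨x, rfl⟩ := hA; exact ⟨x, rfl⟩
  · intro A hA B hB hne
    simp only [Finset.mem_coe, Ppart, Finset.mem_image, Finset.mem_univ, true_and] at hA hB
    obtain ⟨x, rfl⟩ := hA; obtain ⟨y, rfl⟩ := hB
    exact Set.disjoint_singleton.mpr fun h => hne (by rw [h])
  · ext v
    simp only [Set.mem_sUnion, Finset.mem_coe, Ppart, Finset.mem_image, Finset.mem_univ,
      true_and, Set.mem_univ, iff_true]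
    exact ⟨{v}, ⟨v, rfl⟩, rfl⟩
  · intro A hA
    simp only [Ppart, Finset.mem_image, Finset.mem_univ, true_and] at hA
    obtain ⟨x, rfl⟩ := hA
    right
    refine ⟨not_fds_singleton x, {(x.1, x.2 + 1)}, ?_, ?_, not_fds_singleton _, ?_⟩
    · simp only [Ppart, Finset.mem_image, Finset.mem_univ, true_and]
      exact ⟨_, rfl⟩
    · intro h
      have h2 := (Prod.ext_iff.mp (Set.singleton_eq_singleton_iff.mp h)).2
      simp [Fin.ext_iff, Fin.add_def] at h2
      omega
    · have hu : ({x} ∪ {(x.1, x.2 + 1)} : Set VV) = {(x.1, 0), (x.1, 1)} := by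
        obtain ⟨a, b⟩ := x
        fin_cases b
        · rw [Set.singleton_union]; rfl
        · rw [Set.singleton_union]; exact Set.pair_comm _ _
      rw [hu]; exact fds_pair x.1

theorem stmt_13 :
    fairCoalitionNumber ((⊤ : SimpleGraph (Fin 3)) □ (⊤ : SimpleGraph (Fin 2))) = 6 := by
  have hmem : 6 ∈ {n | ∃ P : Finset (Set VV), IsFairCoalitionPartition GG P ∧ P.card = n} :=
    ⟨Ppart, Ppart_valid, Ppart_card⟩
  have hub : ∀ n ∈ {n | ∃ P : Finset (Set VV), IsFairCoalitionPartition GG P ∧ P.card = n},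
      n ≤ 6 := by
    rintro n ⟨P, hP, rfl⟩; exact card_le6 P hP
  exact le_antisymm (csSup_le ⟨6, hmem⟩ hub) (le_csSup ⟨6, hub⟩ hmem)
end
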